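/- Let A be the HiPPO-LegS matrix and P the vector with Pₙ = (n + 1/2)^{1/2}. Then A^{(N)} := A + P Pᵀ satisfies: A^{(N)} + (A^{(N)})ᵀ = -I, i.e., A^{(N)} + (1/2)I is skew-symmetric. In particular A^{(N)} is a normal matrix and every eigenvalue of A^{(N)} has real part -1/2. -/

import Mathlib

open Matrix

open scoped ComplexOrder

theorem hippo_normal_matrix (N : ℕ)
    (A : Matrix (Fin N) (Fin N) ℝ)
    (hA : ∀ n k : Fin N, A n k =
      if (k : ℕ) < (n : ℕ) then
        -(Real.sqrt (2 * (n : ℝ) + 1) * Real.sqrt (2 * (k : ℝ) + 1))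
      else if n = k then -((n : ℝ) + 1) else 0)
    (P : Fin N → ℝ) (hP : ∀ n, P n = Real.sqrt ((n : ℝ) + 1/2))
    (AN : Matrix (Fin N) (Fin N) ℝ) (hAN : AN = A + Matrix.vecMulVec P P) :
    AN + ANᵀ = -1 ∧
    AN * ANᵀ = ANᵀ * AN ∧
    ∀ μ ∈ spectrum ℂ (AN.map (Complex.ofReal)), μ.re = -1/2 := by
  have sq2 : ∀ m : Fin N, Real.sqrt (2 * (m : ℝ) + 1)
      = Real.sqrt 2 * Real.sqrt ((m : ℝ) + 1/2) := by
    intro m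
    rw [show (2 * (m : ℝ) + 1) = 2 * ((m : ℝ) + 1/2) by ring,
      Real.sqrt_mul (by norm_num)]
  have hnn : ∀ m : Fin N, (0:ℝ) ≤ (m : ℝ) + 1/2 := by
    intro m; positivity
  have h22 : Real.sqrt 2 * Real.sqrt 2 = 2 :=
    Real.mul_self_sqrt (by norm_num)
  have key : AN + ANᵀ = -1 := by
    ext n k
    simp only [hAN, Matrix.add_apply, transpose_apply, vecMulVec_apply, hA, hP,
      Matrix.neg_apply, one_apply]
    rcases lt_trichotomy (n : ℕ) (k : ℕ) with h | h | h
    · have hne : n ≠ k := fun e => by simp [e] at h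
      rw [if_neg (by omega), if_neg hne, if_pos h, sq2 n, sq2 k, if_neg hne]
      linear_combination (-(Real.sqrt ((n:ℝ)+1/2) * Real.sqrt ((k:ℝ)+1/2))) * h22
    · have he : n = k := Fin.ext h
      subst he
      rw [if_neg (lt_irrefl _), if_pos rfl, Real.mul_self_sqrt (hnn n), if_pos rfl]
      ring
    · have hne : n ≠ k := fun e => by simp [e] at h
      rw [if_pos h, if_neg (by omega), if_neg hne.symm, sq2 n, sq2 k, if_neg hne]
      linear_combination (-(Real.sqrt ((n:ℝ)+1/2) * Real.sqrt ((k:ℝ)+1/2))) * h22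
  have hTr : ANᵀ = -1 - AN := by
    rw [← key]; abel
  refine ⟨key, ?_, ?_⟩
  · rw [hTr]; noncomm_ring
  · intro μ hμ
    set M := AN.map (Complex.ofReal) with hM
    have hMH : Mᴴ = (ANᵀ).map (Complex.ofReal) := by
      ext i j
      simp [hM, conjTranspose_apply, Complex.conj_ofReal]
    have hMsum : M + Mᴴ = -1 := by
      have e1 : M + Mᴴ = (AN + ANᵀ).map Complex.ofReal := by
        ext i j; simp [hM, hMH]
      rw [e1, key]
      ext i j
      simp only [map_apply, Matrix.neg_apply, one_apply, apply_ite Complex.ofReal]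
      split <;> simp
    rw [← AlgEquiv.spectrum_eq (Matrix.toLinAlgEquiv' (R := ℂ) (n := Fin N)) M,
      ← Module.End.hasEigenvalue_iff_mem_spectrum] at hμ
    obtain ⟨v, hv⟩ := hμ.exists_hasEigenvector
    have hv0 : v ≠ 0 := hv.right
    have hmv : M *ᵥ v = μ • v := by
      have := hv.apply_eq_smul
      rwa [Matrix.toLinAlgEquiv'_apply] at this
    have hc : star v ⬝ᵥ v ≠ 0 := by
      rwa [ne_eq, dotProduct_star_self_eq_zero]
    have hcstar : star (star v ⬝ᵥ v) = star v ⬝ᵥ v := by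
      rw [← star_dotProduct_star, star_star]
    have h1 : star v ⬝ᵥ (M *ᵥ v) = μ * (star v ⬝ᵥ v) := by
      rw [hmv, dotProduct_smul, smul_eq_mul]
    have h2 : star v ⬝ᵥ (Mᴴ *ᵥ v) = (starRingEnd ℂ) μ * (star v ⬝ᵥ v) := by
      rw [dotProduct_mulVec, ← Matrix.star_mulVec, star_dotProduct, h1,
        star_mul', hcstar]
      rfl
    have h3 : star v ⬝ᵥ ((M + Mᴴ) *ᵥ v) = -(star v ⬝ᵥ v) := by
      rw [hMsum]
      simp [Matrix.neg_mulVec, Matrix.one_mulVec]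
    rw [Matrix.add_mulVec, dotProduct_add, h1, h2, ← add_mul] at h3
    have h4 : μ + (starRingEnd ℂ) μ = -1 :=
      mul_right_cancel₀ hc (h3.trans (by ring))
    have h5 := Complex.add_conj μ
    rw [h4] at h5
    have h6 : (-1 : ℝ) = 2 * μ.re := by exact_mod_cast h5
    linarith
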